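/- Let Y ⊆ ℝ^{d'} be a nonempty closed convex set and let f : ℝ^d × Y → ℝ be such that for every x ∈ ℝ^d the function y ↦ f(x,y) is μ_y-strongly concave on Y (μ_y > 0) and attains its maximum at a point ŷ(x) ∈ Y. Suppose (x_*, y_*) ∈ ℝ^d × Y is a saddle point of f, and let P(x) = max_{y∈Y} f(x,y) and P_* = P(x_*). Then for every x ∈ ℝ^d and every y ∈ Y: (i) ‖ŷ(x) − y_*‖² ≤ (2/μ_y)(P(x) − P_*); (ii) ‖y − y_*‖² ≤ (4/μ_y)(P(x) − f(x,y)) + (4/μ_y)(P(x) − P_*). -/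

import Mathlib

open RealInnerProductSpace

lemma strong_concave_growth {E : Type*} [NormedAddCommGroup E] [InnerProductSpace ℝ E]
    {Y : Set E} (hYcv : Convex ℝ Y) {g : E → ℝ} {μ : ℝ} (hμ : 0 < μ)
    (hc : ConcaveOn ℝ Y fun y => g y + μ / 2 * ‖y‖ ^ 2)
    {yh : E} (hyh : yh ∈ Y) (hmax : ∀ y ∈ Y, g y ≤ g yh) :
    ∀ y ∈ Y, μ / 2 * ‖yh - y‖ ^ 2 ≤ g yh - g y := by
  intro y hy
  have hD : 0 ≤ g yh - g y := sub_nonneg.2 (hmax y hy)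
  have hstep : ∀ t : ℝ, 0 < t → t < 1 →
      (1 - t) * (μ / 2 * ‖yh - y‖ ^ 2) ≤ g yh - g y := by
    intro t ht0 ht1
    have ha : (0:ℝ) ≤ 1 - t := by linarith
    have hb : (0:ℝ) ≤ t := ht0.le
    have hab : (1 - t) + t = 1 := by ring
    have hcc := hc.2 hyh hy ha hb hab
    simp only [smul_eq_mul] at hcc
    set z := (1 - t) • yh + t • y with hz
    have hzY : z ∈ Y := hYcv hyh hy ha hb hab
    have hgz : g z ≤ g yh := hmax z hzY
    have e1 := norm_add_sq_real ((1 - t) • yh) (t • y)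
    have e2 := norm_sub_sq_real yh y
    have e3 : ⟪(1 - t) • yh, t • y⟫ = (1 - t) * t * ⟪yh, y⟫ := by
      rw [real_inner_smul_left, real_inner_smul_right]; ring
    have e4 : ‖(1 - t) • yh‖ = (1 - t) * ‖yh‖ := by
      rw [norm_smul, Real.norm_eq_abs, abs_of_nonneg ha]
    have e5 : ‖t • y‖ = t * ‖y‖ := by
      rw [norm_smul, Real.norm_eq_abs, abs_of_nonneg hb]
    have hnorm : ‖z‖ ^ 2 = (1 - t) * ‖yh‖ ^ 2 + t * ‖y‖ ^ 2
        - (1 - t) * t * ‖yh - y‖ ^ 2 := by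
      rw [hz, e1, e4, e5, e3, e2]; ring
    have hdiv : (0:ℝ) < t := ht0
    nlinarith [hcc, hnorm, hgz, mul_pos ht0 hμ]
  by_contra hcon
  push_neg at hcon
  set c := μ / 2 * ‖yh - y‖ ^ 2 with hc'
  set D := g yh - g y with hD'
  have hcpos : 0 < c := lt_of_le_of_lt hD hcon
  have hDc : D / c < 1 := (div_lt_one hcpos).2 hcon
  have hDc0 : 0 ≤ D / c := div_nonneg hD hcpos.le
  set t := (1 - D / c) / 2 with ht
  have ht0 : 0 < t := by rw [ht]; linarith
  have ht1 : t < 1 := by rw [ht]; linarith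
  have := hstep t ht0 ht1
  have hDeq : D / c * c = D := div_mul_cancel₀ D hcpos.ne'
  nlinarith [this, hDeq, hcpos]

/-- If `f(x,·)` is μy-strongly concave with maximizer `ŷ(x)` and `(x_*, y_*)` is a saddle point,
then (i) `‖ŷ(x) − y_*‖² ≤ (2/μy)(P(x) − P_*)` and
(ii) `‖y − y_*‖² ≤ (4/μy)(P(x) − f(x,y)) + (4/μy)(P(x) − P_*)`. -/
theorem stmt16 {d d' : ℕ}
    (Y : Set (EuclideanSpace ℝ (Fin d')))
    (hYne : Y.Nonempty) (hYcl : IsClosed Y) (hYcv : Convex ℝ Y)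
    (f : EuclideanSpace ℝ (Fin d) → EuclideanSpace ℝ (Fin d') → ℝ)
    (μy : ℝ) (hμy : 0 < μy)
    (hsc : ∀ x, ConcaveOn ℝ Y fun y => f x y + μy / 2 * ‖y‖ ^ 2)
    (yhat : EuclideanSpace ℝ (Fin d) → EuclideanSpace ℝ (Fin d'))
    (hyhatmem : ∀ x, yhat x ∈ Y)
    (hyhatmax : ∀ x, ∀ y ∈ Y, f x y ≤ f x (yhat x))
    (xs : EuclideanSpace ℝ (Fin d)) (ys : EuclideanSpace ℝ (Fin d')) (hys : ys ∈ Y)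
    (hsaddle : ∀ x : EuclideanSpace ℝ (Fin d), ∀ y ∈ Y, f xs y ≤ f xs ys ∧ f xs ys ≤ f x ys)
    (P : EuclideanSpace ℝ (Fin d) → ℝ)
    (hP : ∀ x, P x = f x (yhat x)) :
    ∀ x : EuclideanSpace ℝ (Fin d), ∀ y ∈ Y,
      ‖yhat x - ys‖ ^ 2 ≤ 2 / μy * (P x - P xs) ∧
      ‖y - ys‖ ^ 2 ≤ 4 / μy * (P x - f x y) + 4 / μy * (P x - P xs) := by
  intro x y hy
  have hgrow := strong_concave_growth hYcv hμy (hsc x) (hyhatmem x) (hyhatmax x)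
  -- P xs = f xs ys
  have hPxs : P xs = f xs ys := by
    rw [hP xs]
    exact le_antisymm ((hsaddle x (yhat xs) (hyhatmem xs)).1) (hyhatmax xs ys hys)
  -- f xs ys ≤ f x ys
  have hfys : P xs ≤ f x ys := hPxs ▸ (hsaddle x ys hys).2
  -- growth at ys
  have h1 : μy / 2 * ‖yhat x - ys‖ ^ 2 ≤ P x - f x ys := by
    rw [hP x]; exact hgrow ys hys
  have h1' : μy / 2 * ‖yhat x - ys‖ ^ 2 ≤ P x - P xs := le_trans h1 (by linarith)
  -- growth at y
  have h2 : μy / 2 * ‖yhat x - y‖ ^ 2 ≤ P x - f x y := by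
    rw [hP x]; exact hgrow y hy
  constructor
  · rw [div_mul_eq_mul_div, le_div_iff₀ hμy]
    nlinarith [h1']
  · have htri : ‖y - ys‖ ≤ ‖y - yhat x‖ + ‖yhat x - ys‖ := by
      have hdec : y - ys = (y - yhat x) + (yhat x - ys) := by abel
      rw [hdec]; exact norm_add_le _ _
    have hn1 : ‖y - yhat x‖ = ‖yhat x - y‖ := norm_sub_rev _ _
    have hsq : ‖y - ys‖ ^ 2 ≤ 2 * ‖yhat x - y‖ ^ 2 + 2 * ‖yhat x - ys‖ ^ 2 := by
      nlinarith [htri, hn1, norm_nonneg (y - ys), norm_nonneg (y - yhat x),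
        norm_nonneg (yhat x - ys), sq_nonneg (‖y - yhat x‖ - ‖yhat x - ys‖)]
    have key : μy * ‖y - ys‖ ^ 2 ≤ 4 * (P x - f x y) + 4 * (P x - P xs) := by
      nlinarith [h1', h2, hsq]
    rw [div_mul_eq_mul_div, div_mul_eq_mul_div, ← add_div, le_div_iff₀ hμy]
    nlinarith [key]
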